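/- Let G be a framified constraint graph and let u ∈ [n]* and x, y ∈ R satisfy ℓ((u,x),(u,y)) = ∞. Then for every N ∈ ℕ there is a down-then-up path in G from (u,x) to (u,y) of strict length at least N. -/

import Mathlib

namespace ConstraintGraphs

/-- Nodes of the infinite `n`-ary tree: finite words over `{1,…,n}`. -/
abbrev Node (n : ℕ) := List (Fin n)

/-- Vertices: pairs of a tree node and a register. -/
abbrev Vtx (n : ℕ) (R : Type) := Node n × R

/-- `IsChild v u` : the word `v` is a child of the word `u`. -/
def IsChild {n : ℕ} (v u : Node n) : Prop := ∃ γ : Fin n, v = u ++ [γ]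

/-- A tree-structured constraint graph on the vertex set `[n]* × R`:
two edge relations (strict edges `lt` and equality edges `eqe`) such that
every edge joins vertices lying at the same node or at a parent/child pair. -/
structure CGraph (n : ℕ) (R : Type) where
  lt : Vtx n R → Vtx n R → Prop
  eqe : Vtx n R → Vtx n R → Prop
  local_edges : ∀ a b : Vtx n R, lt a b ∨ eqe a b →
    a.1 = b.1 ∨ IsChild b.1 a.1 ∨ IsChild a.1 b.1

variable {n : ℕ} {R : Type}

/-- `p 0, …, p k` is a (finite) path in `G`. -/
def CGraph.IsPathTo (G : CGraph n R) (p : ℕ → Vtx n R) (k : ℕ) : Prop :=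
  ∀ i < k, G.lt (p i) (p (i + 1)) ∨ G.eqe (p i) (p (i + 1))

/-- The strict length of the finite path `p 0, …, p k`:
the number of indices `i < k` where a strict edge is used. -/
noncomputable def CGraph.strictLen (G : CGraph n R) (p : ℕ → Vtx n R) (k : ℕ) : ℕ :=
  Set.ncard {i : ℕ | i < k ∧ G.lt (p i) (p (i + 1))}

/-- The word `w₁ ⋯ w_i` (the first `i` letters of the infinite word `w`). -/
def wpfx (w : ℕ → Fin n) (i : ℕ) : Node n := (List.range i).map w

/-- A violation of condition (★) for the pair of relations `slt` (strict edges)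
and `seq` (equality edges): a node `u`, registers `x, y`, an infinite word `w`,
an infinite forward path `f` from `(u,x)` along `w` and an infinite backward
path `b` from `(u,y)` along `w`, with a strict edge from `f i` to `b i` for every
`i`, such that `f` or `b` uses infinitely many strict edges. -/
def StarViol (slt seq : Vtx n R → Vtx n R → Prop) : Prop :=
  ∃ (u : Node n) (x y : R) (w : ℕ → Fin n) (f b : ℕ → Vtx n R),
    f 0 = (u, x) ∧ b 0 = (u, y) ∧
    (∀ i : ℕ, (f i).1 = u ++ wpfx w i) ∧
    (∀ i : ℕ, (b i).1 = u ++ wpfx w i) ∧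
    (∀ i : ℕ, slt (f i) (f (i + 1)) ∨ seq (f i) (f (i + 1))) ∧
    (∀ i : ℕ, slt (b (i + 1)) (b i) ∨ seq (b (i + 1)) (b i)) ∧
    (∀ i : ℕ, slt (f i) (b i)) ∧
    ((∀ N : ℕ, ∃ i, N ≤ i ∧ slt (f i) (f (i + 1))) ∨
      (∀ N : ℕ, ∃ i, N ≤ i ∧ slt (b (i + 1)) (b i)))

/-- Condition (★) for a tree-structured constraint graph. -/
def Star (G : CGraph n R) : Prop := ¬ StarViol G.lt G.eqe

/-- The label set 𝐔: `below` is U_{<c₀}, `above` is U_{c_α<}, and `atc c` is U_c. -/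
inductive ULab where
  | below : ULab
  | above : ULab
  | atc : ℤ → ULab

/-- `inBag v a` : the vertex `a` lies in the bag of the node `v`
(i.e. `a` lies at `v` or at the parent of `v`). -/
def inBag (v : Node n) (a : Vtx n R) : Prop := a.1 = v ∨ IsChild v a.1

/-- A framified constraint graph: a tree-structured constraint graph together with
a total labeling by 𝐔 (with the integer labels in `[c₀, c_α]`), such that every
edge has both endpoints in a common bag, and for all distinct vertices in a common
bag conditions (1)–(5) of the definition of frames hold. -/
structure Framified (n : ℕ) (R : Type) (c₀ cα : ℤ) extends CGraph n R where
  lab : Vtx n R → ULab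
  lab_mem : ∀ (v : Vtx n R) (c : ℤ), lab v = ULab.atc c → c₀ ≤ c ∧ c ≤ cα
  edge_bag : ∀ a b : Vtx n R, lt a b ∨ eqe a b → ∃ v : Node n, inBag v a ∧ inBag v b
  complete : ∀ (v : Node n) (a b : Vtx n R), inBag v a → inBag v b → a ≠ b →
    lt a b ∨ lt b a ∨ eqe a b ∨ eqe b a
  no_bag_cycle : ∀ v : Node n,
    ¬ ∃ (k : ℕ) (p : ℕ → Vtx n R), 0 < k ∧ p 0 = p k ∧
      (∀ i < k, lt (p i) (p (i + 1)) ∨ eqe (p i) (p (i + 1))) ∧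
      (∃ i < k, lt (p i) (p (i + 1))) ∧ (∀ i ≤ k, inBag v (p i))
  eq_symm : ∀ (v : Node n) (a b : Vtx n R), inBag v a → inBag v b → a ≠ b →
    eqe a b → eqe b a
  eq_lab : ∀ (v : Node n) (a b : Vtx n R), inBag v a → inBag v b → a ≠ b →
    eqe a b → lab a = lab b
  lab_eq : ∀ (v : Node n) (a b : Vtx n R), inBag v a → inBag v b → a ≠ b →
    ∀ c : ℤ, lab a = ULab.atc c → lab b = ULab.atc c → eqe a b
  lt_lab : ∀ (v : Node n) (a b : Vtx n R), inBag v a → inBag v b → a ≠ b →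
    lt a b → lab a = ULab.below ∨ lab b = ULab.above ∨
      ∃ c c' : ℤ, lab a = ULab.atc c ∧ lab b = ULab.atc c' ∧ c < c'

/-- Embeddability into ℤ of a framified constraint graph. -/
def Framified.Embeddable {c₀ cα : ℤ} (G : Framified n R c₀ cα) : Prop :=
  ∃ κ : Vtx n R → ℤ,
    (∀ a b : Vtx n R, G.lt a b → κ a < κ b) ∧
    (∀ a b : Vtx n R, G.eqe a b → κ a = κ b) ∧
    (∀ (v : Vtx n R) (c : ℤ), G.lab v = ULab.atc c → κ v = c)

/-- `ℓ((u,x),(u,y)) = ∞` : for every `m` there is a cycle-free path in `G` from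
`(u,x)` to `(u,y)` of strict length at least `m` staying in the subtree rooted at `u`. -/
def EllInf {c₀ cα : ℤ} (G : Framified n R c₀ cα) (u : Node n) (x y : R) : Prop :=
  ∀ m : ℕ, ∃ (k : ℕ) (p : ℕ → Vtx n R),
    p 0 = (u, x) ∧ p k = (u, y) ∧ G.toCGraph.IsPathTo p k ∧
    (∀ i j : ℕ, i ≤ k → j ≤ k → p i = p j → i = j) ∧
    (∀ i ≤ k, u <+: (p i).1) ∧
    m ≤ G.toCGraph.strictLen p k

/-- A finite path `p 0, …, p k` goes down-then-up: up to some index `j < k` every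
step goes to a child, and after `j` every step goes to the parent. -/
def DownThenUp (p : ℕ → Vtx n R) (k : ℕ) : Prop :=
  ∃ j : ℕ, j < k ∧ (∀ i < j, IsChild (p (i + 1)).1 (p i).1) ∧
    (∀ i : ℕ, j < i → i < k → IsChild (p i).1 (p (i + 1)).1)


/-! ### Auxiliary development -/

open Classical Finset

variable {c₀ cα : ℤ}

/-- Either kind of edge. -/
def Edg (G : CGraph n R) (a b : Vtx n R) : Prop := G.lt a b ∨ G.eqe a b

/-- Strict length as a `Finset` cardinality. -/
noncomputable def SL (G : CGraph n R) (p : ℕ → Vtx n R) (k : ℕ) : ℕ :=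
  ((Finset.range k).filter (fun i => G.lt (p i) (p (i + 1)))).card

lemma strictLen_eq (G : CGraph n R) (p : ℕ → Vtx n R) (k : ℕ) :
    G.strictLen p k = SL G p k := by
  classical
  rw [CGraph.strictLen, SL, ← Set.ncard_coe_finset]
  congr 1
  ext i
  simp [Finset.mem_filter, Finset.mem_range]

lemma SL_le (G : CGraph n R) (p : ℕ → Vtx n R) (k : ℕ) : SL G p k ≤ k := by
  classical
  calc ((Finset.range k).filter _).card ≤ (Finset.range k).card := Finset.card_filter_le _ _
  _ = k := Finset.card_range k

lemma SL_pos (G : CGraph n R) {p : ℕ → Vtx n R} {k : ℕ} (h : 1 ≤ SL G p k) :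
    ∃ i, i < k ∧ G.lt (p i) (p (i + 1)) := by
  classical
  have : (((Finset.range k).filter (fun i => G.lt (p i) (p (i + 1))))).Nonempty :=
    Finset.card_pos.mp h
  obtain ⟨i, hi⟩ := this
  simp only [Finset.mem_filter, Finset.mem_range] at hi
  exact ⟨i, hi.1, hi.2⟩

lemma SL_pos_of (G : CGraph n R) {p : ℕ → Vtx n R} {k i : ℕ} (hik : i < k)
    (h : G.lt (p i) (p (i + 1))) : 1 ≤ SL G p k := by
  classical
  apply Finset.card_pos.mpr
  exact ⟨i, by simp [Finset.mem_filter, Finset.mem_range, hik, h]⟩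

lemma SL_split (G : CGraph n R) (p : ℕ → Vtx n R) {r k : ℕ} (h : r ≤ k) :
    SL G p k = SL G p r + SL G (fun i => p (r + i)) (k - r) := by
  classical
  unfold SL
  have hk : k = r + (k - r) := by omega
  rw [hk, Finset.range_add, Finset.filter_union, Finset.card_union_of_disjoint, Finset.filter_map,
    Finset.card_map]
  · have hkr : r + (k - r) - r = k - r := by omega
    congr 1
    apply congrArg Finset.card
    ext i
    simp only [Finset.mem_filter, Finset.mem_range, Function.comp, addLeftEmbedding_apply, hkr]
    constructor
    · rintro ⟨h1, h2⟩
      exact ⟨h1, by rw [show r + (i + 1) = r + i + 1 by omega]; exact h2⟩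
    · rintro ⟨h1, h2⟩
      exact ⟨h1, by rw [show r + (i + 1) = r + i + 1 by omega] at h2; exact h2⟩
  · apply Finset.disjoint_filter_filter
    rw [Finset.disjoint_left]
    intro i hi hi2
    simp only [Finset.mem_range, Finset.mem_map, addLeftEmbedding_apply] at hi hi2
    omega

lemma SL_one (G : CGraph n R) {p : ℕ → Vtx n R} (h : 1 ≤ SL G p 1) :
    G.lt (p 0) (p 1) := by
  obtain ⟨i, hi, h⟩ := SL_pos G h
  have : i = 0 := by omega
  subst this; exact h

lemma SL_congr (G : CGraph n R) {p q : ℕ → Vtx n R} {k : ℕ}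
    (h : ∀ i ≤ k, p i = q i) : SL G p k = SL G q k := by
  classical
  unfold SL
  congr 1
  apply Finset.filter_congr
  intro i hi
  simp only [Finset.mem_range] at hi
  rw [h i (by omega), h (i + 1) (by omega)]


/-! ### Tree lemmas -/

lemma edg_adj {G : CGraph n R} {a b : Vtx n R} (h : Edg G a b) :
    a.1 = b.1 ∨ IsChild b.1 a.1 ∨ IsChild a.1 b.1 := G.local_edges a b h

lemma isChild_length {v u : Node n} (h : IsChild v u) : v.length = u.length + 1 := by
  obtain ⟨γ, rfl⟩ := h; simp

lemma prefix_of_child {v u : Node n} (h : IsChild v u) : u <+: v := by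
  obtain ⟨γ, rfl⟩ := h; exact ⟨[γ], rfl⟩

/-- classification of a step out of the root `w` of the subtree -/
lemma step_from_root {w x y : Node n} (hadj : x = y ∨ IsChild y x ∨ IsChild x y)
    (hx : x = w) (hy : w <+: y) : y = w ∨ ∃ γ : Fin n, y = w ++ [γ] := by
  subst hx
  rcases hadj with h | h | h
  · exact Or.inl h.symm
  · exact Or.inr h
  · exfalso
    obtain ⟨γ, hγ⟩ := h
    have h1 := hy.length_le
    have h2 : x.length = y.length + 1 := by rw [hγ]; simp
    omega

lemma step_in_subtree {w : Node n} {γ : Fin n} {x y : Node n}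
    (hadj : x = y ∨ IsChild y x ∨ IsChild x y)
    (hx : (w ++ [γ]) <+: x) (hyw : w <+: y) (hyne : y ≠ w) : (w ++ [γ]) <+: y := by
  rcases hadj with h | h | h
  · rwa [h] at hx
  · obtain ⟨δ, rfl⟩ := h
    exact hx.trans ⟨[δ], rfl⟩
  · obtain ⟨δ, rfl⟩ := h
    obtain ⟨t, rfl⟩ := hyw
    have ht : t ≠ [] := by rintro rfl; simp at hyne
    have h2 : [γ] <+: t ++ [δ] := by
      have hx' : w ++ [γ] <+: w ++ (t ++ [δ]) := by
        rwa [← List.append_assoc]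
      exact (List.prefix_append_right_inj w).mp hx'
    obtain ⟨c, t', rfl⟩ := List.exists_cons_of_ne_nil ht
    have hγc : γ = c := by
      obtain ⟨s, hs⟩ := h2
      simp only [List.cons_append, List.singleton_append] at hs
      exact (List.cons.injEq _ _ _ _ ▸ hs).1.symm ▸ rfl
    subst hγc
    exact ⟨t', by simp⟩

lemma return_step {w : Node n} {γ : Fin n} {x y : Node n}
    (hadj : x = y ∨ IsChild y x ∨ IsChild x y)
    (hx : (w ++ [γ]) <+: x) (hy : y = w) : x = w ++ [γ] := by
  have hlen : w.length + 1 ≤ x.length := by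
    have := hx.length_le; simp at this; omega
  rcases hadj with h | h | h
  · exfalso; rw [h, hy] at hlen; omega
  · exfalso
    obtain ⟨δ, hδ⟩ := h
    have hylen : y.length = x.length + 1 := by rw [hδ]; simp
    have hyw : y.length = w.length := by rw [hy]
    omega
  · obtain ⟨δ, hδ⟩ := h
    rw [hy] at hδ
    subst hδ
    have h2 : [γ] <+: [δ] := (List.prefix_append_right_inj w).mp hx
    obtain ⟨s, hs⟩ := h2
    simp only [List.singleton_append] at hs
    have hγδ : γ = δ := by
      have := (List.cons.injEq _ _ _ _ ▸ hs).1
      exact this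
    rw [hγδ]

/-! ### Bag order lemmas -/

lemma inBag_self {w : Node n} {a : Vtx n R} (h : a.1 = w) : inBag w a := Or.inl h

lemma inBag_parent {w : Node n} {γ : Fin n} {a : Vtx n R} (h : a.1 = w) :
    inBag (w ++ [γ]) a := Or.inr ⟨γ, by rw [h]⟩

/-- no 3-cycles (possibly degenerate) with a strict edge inside a bag -/
lemma no3 (G : Framified n R c₀ cα) {v : Node n} {a b c : Vtx n R}
    (ha : inBag v a) (hb : inBag v b) (hc : inBag v c)
    (e1 : Edg G.toCGraph a b) (e2 : Edg G.toCGraph b c) (e3 : Edg G.toCGraph c a)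
    (hs : G.lt a b ∨ G.lt b c ∨ G.lt c a) : False := by
  apply G.no_bag_cycle v
  refine ⟨3, fun i => if i % 3 = 0 then a else if i % 3 = 1 then b else c,
    by norm_num, by norm_num, ?_, ?_, ?_⟩
  · intro i hi
    interval_cases i <;> simpa [Edg] using (by assumption : Edg G.toCGraph _ _)
  · rcases hs with h | h | h
    · exact ⟨0, by norm_num, by simpa using h⟩
    · exact ⟨1, by norm_num, by simpa using h⟩
    · exact ⟨2, by norm_num, by simpa using h⟩
  · intro i hi
    interval_cases i <;> simp [ha, hb, hc]

lemma edg_trans (G : Framified n R c₀ cα) {v : Node n} {a b c : Vtx n R}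
    (ha : inBag v a) (hb : inBag v b) (hc : inBag v c)
    (hac : a ≠ c)
    (e1 : Edg G.toCGraph a b) (e2 : Edg G.toCGraph b c) : Edg G.toCGraph a c := by
  rcases G.complete v a c ha hc hac with h | h | h | h
  · exact Or.inl h
  · exact absurd (no3 G ha hb hc e1 e2 (Or.inl h) (Or.inr (Or.inr h))) (fun f => f)
  · exact Or.inr h
  · exact Or.inr (G.eq_symm v c a hc ha (Ne.symm hac) h)

lemma edg_trans_strict (G : Framified n R c₀ cα) {v : Node n} {a b c : Vtx n R}
    (ha : inBag v a) (hb : inBag v b) (hc : inBag v c)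
    (hac : a ≠ c)
    (e1 : Edg G.toCGraph a b) (e2 : Edg G.toCGraph b c)
    (hs : G.lt a b ∨ G.lt b c) : G.lt a c := by
  rcases edg_trans G ha hb hc hac e1 e2 with h | h
  · exact h
  · exfalso
    have h' : G.eqe c a := G.eq_symm v a c ha hc hac h
    exact no3 G ha hb hc e1 e2 (Or.inr h') (by tauto)


/-! ### Good paths -/

structure GP (G : Framified n R c₀ cα) (w : Node n) (p : ℕ → Vtx n R) (k : ℕ) : Prop where
  path : G.toCGraph.IsPathTo p k
  inj : ∀ i j, i ≤ k → j ≤ k → p i = p j → i = j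
  sub : ∀ i ≤ k, w <+: (p i).1
  first : (p 0).1 = w
  last : (p k).1 = w

lemma GP.ne {G : Framified n R c₀ cα} {w : Node n} {p : ℕ → Vtx n R} {k : ℕ}
    (hGP : GP G w p k) {i j : ℕ} (hi : i ≤ k) (hj : j ≤ k) (hij : i ≠ j) : p i ≠ p j :=
  fun h => hij (hGP.inj i j hi hj h)

lemma GP.edg {G : Framified n R c₀ cα} {w : Node n} {p : ℕ → Vtx n R} {k : ℕ}
    (hGP : GP G w p k) {i : ℕ} (hi : i < k) : Edg G.toCGraph (p i) (p (i + 1)) :=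
  hGP.path i hi

lemma GP.pre {G : Framified n R c₀ cα} {w : Node n} {p : ℕ → Vtx n R} {k : ℕ}
    (hGP : GP G w p k) {r : ℕ} (hr : r ≤ k) (hw : (p r).1 = w) : GP G w p r where
  path := fun i hi => hGP.path i (by omega)
  inj := fun i j hi hj h => hGP.inj i j (by omega) (by omega) h
  sub := fun i hi => hGP.sub i (by omega)
  first := hGP.first
  last := hw

lemma GP.shiftN {G : Framified n R c₀ cα} {w : Node n} {p : ℕ → Vtx n R} {k : ℕ}
    (hGP : GP G w p k) {r : ℕ} (hr : r ≤ k) (hw : (p r).1 = w) :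
    GP G w (fun i => p (r + i)) (k - r) where
  path := fun i hi => hGP.path (r + i) (by omega)
  inj := fun i j hi hj h => by
    have := hGP.inj (r + i) (r + j) (by omega) (by omega) h
    omega
  sub := fun i hi => hGP.sub (r + i) (by omega)
  first := by simpa using hw
  last := by
    have : r + (k - r) = k := by omega
    rw [this]; exact hGP.last

/-- excursion structure: first return to the root level -/
lemma noRootLt' {w : Node n} {γ : Fin n} : (w ++ [γ]) ≠ w := by
  intro h
  have := congrArg List.length h
  simp at this

lemma excursion {G : Framified n R c₀ cα} {w : Node n} {p : ℕ → Vtx n R} {k : ℕ}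
    (hGP : GP G w p k) {γ : Fin n} (h1 : (p 1).1 = w ++ [γ]) (hk : 1 ≤ k) :
    ∃ r, 2 ≤ r ∧ r ≤ k ∧ (p r).1 = w ∧
      (∀ i, 1 ≤ i → i < r → (w ++ [γ]) <+: (p i).1) ∧ (p (r - 1)).1 = w ++ [γ] := by
  classical
  have hex : ∃ i, 1 ≤ i ∧ i ≤ k ∧ (p i).1 = w := ⟨k, hk, le_refl k, hGP.last⟩
  set r := Nat.find hex with hrdef
  obtain ⟨hr1, hrk, hrw⟩ := Nat.find_spec hex
  have hmin : ∀ i, 1 ≤ i → i < r → (p i).1 ≠ w := by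
    intro i h1i hir hiw
    exact Nat.find_min hex hir ⟨h1i, by omega, hiw⟩
  have hr2 : 2 ≤ r := by
    by_contra hlt
    have h1w : (p 1).1 = w := by
      have h' := hrw
      rw [show Nat.find hex = 1 from by omega] at h'
      exact h'
    exact noRootLt' (h1.symm.trans h1w)
  have hsub : ∀ i, 1 ≤ i → i < r → (w ++ [γ]) <+: (p i).1 := by
    intro i hi
    induction i, hi using Nat.le_induction with
    | base => intro _; rw [h1]
    | succ m hm ihm =>
      intro hmr
      have hadj := edg_adj (hGP.edg (i := m) (by omega))
      exact step_in_subtree hadj (ihm (by omega)) (hGP.sub (m + 1) (by omega))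
        (hmin (m + 1) (by omega) hmr)
  have hlast : (p (r - 1)).1 = w ++ [γ] := by
    have hadj := edg_adj (hGP.edg (i := r - 1) (by omega))
    have hr1' : r - 1 + 1 = r := by omega
    rw [hr1'] at hadj
    exact return_step hadj (hsub (r - 1) (by omega) (by omega)) hrw
  exact ⟨r, hr2, hrk, hrw, hsub, hlast⟩

lemma noRootLt {w : Node n} {γ : Fin n} : (w ++ [γ]) ≠ w := by
  intro h
  have := congrArg List.length h
  simp at this

/-! ### Counting visits -/

noncomputable def V (p : ℕ → Vtx n R) (k : ℕ) (w : Node n) : ℕ :=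
  ((Finset.range (k + 1)).filter (fun i => (p i).1 = w)).card

lemma V_ge2 {p : ℕ → Vtx n R} {k : ℕ} {w : Node n} (h0 : (p 0).1 = w)
    (hk : (p k).1 = w) (hk1 : 1 ≤ k) : 2 ≤ V p k w := by
  classical
  apply Finset.one_lt_card.mpr
  refine ⟨0, ?_, k, ?_, by omega⟩ <;>
    simp [Finset.mem_filter, Finset.mem_range, h0, hk] <;> omega

lemma V_le [Fintype R] {G : Framified n R c₀ cα} {p : ℕ → Vtx n R} {k : ℕ} {w : Node n}
    (hGP : GP G w p k) : V p k w ≤ Fintype.card R := by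
  classical
  have : V p k w ≤ (Finset.univ : Finset R).card := by
    apply Finset.card_le_card_of_injOn (fun i => (p i).2)
    · intro i _; exact Finset.mem_univ _
    · intro i hi j hj hij
      simp only [Finset.coe_filter, Finset.mem_range, Set.mem_setOf_eq] at hi hj
      apply hGP.inj i j (by omega) (by omega)
      exact Prod.ext (hi.2.trans hj.2.symm) hij
  simpa using this

lemma V_shift {p : ℕ → Vtx n R} {k r : ℕ} {w : Node n} (hr1 : 1 ≤ r) (hrk : r ≤ k)
    (h0 : (p 0).1 = w) (hmid : ∀ i, 1 ≤ i → i < r → (p i).1 ≠ w) :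
    V p k w = 1 + V (fun i => p (r + i)) (k - r) w := by
  classical
  unfold V
  have hk : k + 1 = r + (k - r + 1) := by omega
  rw [hk, Finset.range_add, Finset.filter_union, Finset.card_union_of_disjoint, Finset.filter_map,
    Finset.card_map]
  · have h01 : (Finset.range r).filter (fun i => (p i).1 = w) = {0} := by
      ext i
      simp only [Finset.mem_filter, Finset.mem_range, Finset.mem_singleton]
      constructor
      · rintro ⟨hi, hiw⟩
        by_contra hne
        exact hmid i (by omega) hi hiw
      · rintro rfl
        exact ⟨by omega, h0⟩
    rw [h01, Finset.card_singleton]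
    congr 1
    all_goals
      apply congrArg Finset.card
      ext i
      simp [Function.comp, addLeftEmbedding_apply]
  · apply Finset.disjoint_filter_filter
    rw [Finset.disjoint_left]
    intro i hi hi2
    simp only [Finset.mem_range, Finset.mem_map, addLeftEmbedding_apply] at hi hi2
    omega


/-! ### Claim I: subtree paths compress to single bag edges -/

theorem claimI (G : Framified n R c₀ cα) :
    ∀ k (p : ℕ → Vtx n R) (w : Node n), GP G w p k → 1 ≤ k →
      Edg G.toCGraph (p 0) (p k) ∧ (1 ≤ SL G.toCGraph p k → G.lt (p 0) (p k)) := by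
  intro k
  induction k using Nat.strong_induction_on with
  | _ k ih =>
  intro p w hGP hk
  have h0k : p 0 ≠ p k := hGP.ne (by omega) (le_refl k) (by omega)
  have hcl := step_from_root (edg_adj (hGP.edg (i := 0) hk)) hGP.first (hGP.sub 1 hk)
  rcases hcl with h1 | ⟨γ, h1⟩
  · -- horizontal first step
    by_cases hk1 : k = 1
    · subst hk1
      exact ⟨hGP.edg (by omega), fun hsl => SL_one _ hsl⟩
    · have hGPr : GP G w (fun i => p (1 + i)) (k - 1) := hGP.shiftN (by omega) h1
      have hIH := ih (k - 1) (by omega) _ w hGPr (by omega)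
      have hIH' : Edg G.toCGraph (p 1) (p k) ∧
          (1 ≤ SL G.toCGraph (fun i => p (1 + i)) (k - 1) → G.lt (p 1) (p k)) := by
        simpa [show 1 + (k - 1) = k from by omega] using hIH
      have e01 := hGP.edg (i := 0) (by omega)
      have bag0 : inBag w (p 0) := inBag_self hGP.first
      have bag1 : inBag w (p 1) := inBag_self h1
      have bagk : inBag w (p k) := inBag_self hGP.last
      refine ⟨edg_trans G bag0 bag1 bagk h0k e01 hIH'.1, fun hsl => ?_⟩
      have hsplit := SL_split G.toCGraph p (r := 1) (k := k) (by omega)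
      by_cases hs0 : G.lt (p 0) (p 1)
      · exact edg_trans_strict G bag0 bag1 bagk h0k e01 hIH'.1 (Or.inl hs0)
      · have hpos : 1 ≤ SL G.toCGraph (fun i => p (1 + i)) (k - 1) := by
          have hsl1 : SL G.toCGraph p 1 = 0 := by
            by_contra hh
            exact hs0 (SL_one _ (by omega))
          omega
        exact edg_trans_strict G bag0 bag1 bagk h0k e01 hIH'.1 (Or.inr (hIH'.2 hpos))
  · -- excursion first
    obtain ⟨r, hr2, hrk, hrw, hsub, hrm1⟩ := excursion hGP h1 hk
    have hGPin : GP G (w ++ [γ]) (fun i => p (1 + i)) (r - 2) :=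
      { path := fun i hi => hGP.path (1 + i) (by omega)
        inj := fun i j hi hj hpij => by
          have := hGP.inj (1 + i) (1 + j) (by omega) (by omega) hpij
          omega
        sub := fun i hi => hsub (1 + i) (by omega) (by omega)
        first := by simpa using h1
        last := by
          show (p (1 + (r - 2))).1 = w ++ [γ]
          rw [show 1 + (r - 2) = r - 1 from by omega]
          exact hrm1 }
    have e01 := hGP.edg (i := 0) (by omega)
    have erm' : Edg G.toCGraph (p (r - 1)) (p r) := by
      have := hGP.edg (i := r - 1) (by omega)
      rwa [show r - 1 + 1 = r from by omega] at this
    have bag0γ : inBag (w ++ [γ]) (p 0) := inBag_parent hGP.first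
    have bag1γ : inBag (w ++ [γ]) (p 1) := inBag_self h1
    have bagrm1γ : inBag (w ++ [γ]) (p (r - 1)) := inBag_self hrm1
    have bagrγ : inBag (w ++ [γ]) (p r) := inBag_parent hrw
    have H1 : Edg G.toCGraph (p 0) (p (r - 1)) ∧
        ((G.lt (p 0) (p 1) ∨ 1 ≤ SL G.toCGraph (fun i => p (1 + i)) (r - 2)) →
          G.lt (p 0) (p (r - 1))) := by
      by_cases hr2' : r = 2
      · have hr1eq : r - 1 = 1 := by omega
        rw [hr1eq]
        refine ⟨e01, ?_⟩
        rintro (hs | hs)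
        · exact hs
        · exfalso
          have : SL G.toCGraph (fun i => p (1 + i)) (r - 2) = 0 := by
            rw [show r - 2 = 0 from by omega]
            simp [SL]
          omega
      · have hIHin := ih (r - 2) (by omega) _ (w ++ [γ]) hGPin (by omega)
        have hIHin' : Edg G.toCGraph (p 1) (p (r - 1)) ∧
            (1 ≤ SL G.toCGraph (fun i => p (1 + i)) (r - 2) → G.lt (p 1) (p (r - 1))) := by
          simpa [show 1 + (r - 2) = r - 1 from by omega] using hIHin
        have hne0r1 : p 0 ≠ p (r - 1) := hGP.ne (by omega) (by omega) (by omega)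
        refine ⟨edg_trans G bag0γ bag1γ bagrm1γ hne0r1 e01 hIHin'.1, ?_⟩
        rintro (hs | hs)
        · exact edg_trans_strict G bag0γ bag1γ bagrm1γ hne0r1 e01 hIHin'.1 (Or.inl hs)
        · exact edg_trans_strict G bag0γ bag1γ bagrm1γ hne0r1 e01 hIHin'.1
            (Or.inr (hIHin'.2 hs))
    have hne0r : p 0 ≠ p r := hGP.ne (by omega) (by omega) (by omega)
    have H2 : Edg G.toCGraph (p 0) (p r) ∧ (1 ≤ SL G.toCGraph p r → G.lt (p 0) (p r)) := by
      refine ⟨edg_trans G bag0γ bagrm1γ bagrγ hne0r H1.1 erm', fun hsl => ?_⟩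
      by_cases hs0 : G.lt (p 0) (p 1)
      · exact edg_trans_strict G bag0γ bagrm1γ bagrγ hne0r H1.1 erm'
          (Or.inl (H1.2 (Or.inl hs0)))
      · by_cases hsin : 1 ≤ SL G.toCGraph (fun i => p (1 + i)) (r - 2)
        · exact edg_trans_strict G bag0γ bagrm1γ bagrγ hne0r H1.1 erm'
            (Or.inl (H1.2 (Or.inr hsin)))
        · have hlaststep : G.lt (p (r - 1)) (p r) := by
            have hsp1 := SL_split G.toCGraph p (r := 1) (k := r) (by omega)
            have hsp2 := SL_split G.toCGraph (fun i => p (1 + i)) (r := r - 2) (k := r - 1)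
              (by omega)
            have hcan : SL G.toCGraph (fun i => (fun j => p (1 + j)) (r - 2 + i)) (r - 1 - (r - 2))
                = SL G.toCGraph (fun i => p (r - 1 + i)) 1 := by
              rw [show r - 1 - (r - 2) = 1 from by omega]
              apply SL_congr
              intro i hi
              show p (1 + (r - 2 + i)) = p (r - 1 + i)
              congr 1
              omega
            rw [hcan] at hsp2
            have hsl1 : SL G.toCGraph p 1 = 0 := by
              by_contra hh
              exact hs0 (SL_one _ (by omega))
            have hpos : 1 ≤ SL G.toCGraph (fun i => p (r - 1 + i)) 1 := by omega
            have := SL_one G.toCGraph hpos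
            simpa [show r - 1 + 1 = r from by omega] using this
          exact edg_trans_strict G bag0γ bagrm1γ bagrγ hne0r H1.1 erm' (Or.inr hlaststep)
    by_cases hrk' : r = k
    · subst hrk'
      exact H2
    · have hGPrest : GP G w (fun i => p (r + i)) (k - r) := hGP.shiftN (by omega) hrw
      have hIHrest := ih (k - r) (by omega) _ w hGPrest (by omega)
      have hIHrest' : Edg G.toCGraph (p r) (p k) ∧
          (1 ≤ SL G.toCGraph (fun i => p (r + i)) (k - r) → G.lt (p r) (p k)) := by
        simpa [show r + (k - r) = k from by omega] using hIHrest
      have bag0w : inBag w (p 0) := inBag_self hGP.first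
      have bagrw : inBag w (p r) := inBag_self hrw
      have bagkw : inBag w (p k) := inBag_self hGP.last
      refine ⟨edg_trans G bag0w bagrw bagkw h0k H2.1 hIHrest'.1, fun hsl => ?_⟩
      have hsp := SL_split G.toCGraph p (r := r) (k := k) (by omega)
      by_cases hsr : 1 ≤ SL G.toCGraph p r
      · exact edg_trans_strict G bag0w bagrw bagkw h0k H2.1 hIHrest'.1 (Or.inl (H2.2 hsr))
      · exact edg_trans_strict G bag0w bagrw bagkw h0k H2.1 hIHrest'.1
          (Or.inr (hIHrest'.2 (by omega)))


/-! ### The dive decomposition -/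

lemma shift_shift (p : ℕ → Vtx n R) (a b : ℕ) :
    (fun i => p (a + (b + i))) = (fun i => p ((a + b) + i)) := by
  funext i; congr 1; omega

lemma subtree_ne_root {w : Node n} {γ : Fin n} {z : Node n} (h : (w ++ [γ]) <+: z) : z ≠ w := by
  intro hz
  subst hz
  have := h.length_le
  simp at this

lemma mul_expand {a b : ℕ} (h : 1 ≤ a) : a * b = (a - 1) * b + b := by
  conv_lhs => rw [show a = (a - 1) + 1 from by omega]
  rw [Nat.succ_mul]

theorem auxDive (G : Framified n R c₀ cα) :
    ∀ k (p : ℕ → Vtx n R) (w : Node n), GP G w p k → 1 ≤ k →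
      SL G.toCGraph p k + 1 ≤ V p k w ∨
      ∃ off k' γ, 1 ≤ off ∧ off + k' + 1 ≤ k ∧
        GP G (w ++ [γ]) (fun i => p (off + i)) k' ∧
        Edg G.toCGraph (p 0) (p off) ∧ Edg G.toCGraph (p (off + k')) (p k) ∧
        (SL G.toCGraph (fun i => p (off + i)) k' + 1 ≤ SL G.toCGraph p k →
          G.lt (p 0) (p off) ∨ G.lt (p (off + k')) (p k)) ∧
        SL G.toCGraph p k ≤ (V p k w - 1) * (SL G.toCGraph (fun i => p (off + i)) k' + 3) := by
  intro k
  induction k using Nat.strong_induction_on with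
  | _ k ih =>
  intro p w hGP hk
  have hV2 : 2 ≤ V p k w := V_ge2 hGP.first hGP.last hk
  have hcl := step_from_root (edg_adj (hGP.edg (i := 0) hk)) hGP.first (hGP.sub 1 hk)
  rcases hcl with h1 | ⟨γ, h1⟩
  · -- horizontal first step
    by_cases hk1 : k = 1
    · left
      subst hk1
      have := SL_le G.toCGraph p 1
      omega
    · have hGPr : GP G w (fun i => p (1 + i)) (k - 1) := hGP.shiftN (by omega) h1
      have hVsh : V p k w = 1 + V (fun i => p (1 + i)) (k - 1) w :=
        V_shift (by omega) (by omega) hGP.first (fun i h1i hir => by omega)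
      have hsp1 := SL_split G.toCGraph p (r := 1) (k := k) (by omega)
      have hs0le := SL_le G.toCGraph p 1
      rcases ih (k - 1) (by omega) _ w hGPr (by omega) with hleft | hdive
      · left
        omega
      · obtain ⟨off₂, k', δ, hoff1, hoffk, hGP2, he1, he2, hgain, hbound⟩ := hdive
        rw [shift_shift p 1 off₂] at hgain hbound
        rw [show 1 + (off₂ + k') = (1 + off₂) + k' from by omega] at he2 hgain
        rw [show 1 + (k - 1) = k from by omega] at he2 hgain
        have hGP2' : GP G (w ++ [δ]) (fun i => p (1 + off₂ + i)) k' := by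
          first
          | exact hGP2
          | rwa [shift_shift p 1 off₂] at hGP2
        right
        refine ⟨1 + off₂, k', δ, by omega, by omega, hGP2', ?_, he2, ?_, ?_⟩
        · -- Edg (p 0) (p (1 + off₂))
          have bag0 : inBag (w ++ [δ]) (p 0) := inBag_parent hGP.first
          have bag1 : inBag (w ++ [δ]) (p 1) := inBag_parent h1
          have bagc : inBag (w ++ [δ]) (p (1 + off₂)) := inBag_self hGP2'.first
          exact edg_trans G bag0 bag1 bagc
            (hGP.ne (by omega) (by omega) (by omega)) (hGP.edg (by omega)) he1
        · -- gain
          intro hg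
          have bag0 : inBag (w ++ [δ]) (p 0) := inBag_parent hGP.first
          have bag1 : inBag (w ++ [δ]) (p 1) := inBag_parent h1
          have bagc : inBag (w ++ [δ]) (p (1 + off₂)) := inBag_self hGP2'.first
          by_cases hs0 : G.lt (p 0) (p 1)
          · exact Or.inl (edg_trans_strict G bag0 bag1 bagc
              (hGP.ne (by omega) (by omega) (by omega)) (hGP.edg (by omega)) he1 (Or.inl hs0))
          · have hsl1 : SL G.toCGraph p 1 = 0 := by
              by_contra hh
              exact hs0 (SL_one _ (by omega))
            rcases hgain (by omega) with hg' | hg'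
            · exact Or.inl (edg_trans_strict G bag0 bag1 bagc
                (hGP.ne (by omega) (by omega) (by omega)) (hGP.edg (by omega)) he1
                (Or.inr hg'))
            · exact Or.inr hg'
        · -- bound
          set I := SL G.toCGraph (fun i => p ((1 + off₂) + i)) k' with hIdef
          set Vr := V (fun i => p (1 + i)) (k - 1) w with hVrdef
          have hVr2 : 2 ≤ Vr := by
            rw [hVrdef]
            exact V_ge2 (p := fun i => p (1 + i)) (k := k - 1) hGPr.first hGPr.last (by omega)
          have hmul : Vr * (I + 3) = (Vr - 1) * (I + 3) + (I + 3) := mul_expand (by omega)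
          rw [show V p k w - 1 = Vr from by omega]
          omega
  · -- excursion first
    obtain ⟨r, hr2, hrk, hrw, hsub, hrm1⟩ := excursion hGP h1 hk
    have hGPin : GP G (w ++ [γ]) (fun i => p (1 + i)) (r - 2) :=
      { path := fun i hi => hGP.path (1 + i) (by omega)
        inj := fun i j hi hj hpij => by
          have := hGP.inj (1 + i) (1 + j) (by omega) (by omega) hpij
          omega
        sub := fun i hi => hsub (1 + i) (by omega) (by omega)
        first := by simpa using h1
        last := by
          show (p (1 + (r - 2))).1 = w ++ [γ]
          rw [show 1 + (r - 2) = r - 1 from by omega]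
          exact hrm1 }
    have e01 := hGP.edg (i := 0) (by omega)
    have erm' : Edg G.toCGraph (p (r - 1)) (p r) := by
      have := hGP.edg (i := r - 1) (by omega)
      rwa [show r - 1 + 1 = r from by omega] at this
    have hmid : ∀ i, 1 ≤ i → i < r → (p i).1 ≠ w := fun i h1i hir =>
      subtree_ne_root (hsub i h1i hir)
    have hVsh : V p k w = 1 + V (fun i => p (r + i)) (k - r) w :=
      V_shift (by omega) (by omega) hGP.first hmid
    -- strict length decomposition
    set I₀ := SL G.toCGraph (fun i => p (1 + i)) (r - 2) with hI₀def
    have hsp1 := SL_split G.toCGraph p (r := 1) (k := k) (by omega)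
    have hsp2 := SL_split G.toCGraph (fun i => p (1 + i)) (r := r - 2) (k := k - 1) (by omega)
    rw [shift_shift p 1 (r - 2), show 1 + (r - 2) = r - 1 from by omega] at hsp2
    have hsp3 := SL_split G.toCGraph (fun i => p ((r - 1) + i)) (r := 1)
      (k := k - 1 - (r - 2)) (by omega)
    rw [shift_shift p (r - 1) 1, show r - 1 + 1 = r from by omega] at hsp3
    rw [show k - 1 - (r - 2) - 1 = k - r from by omega] at hsp3
    set s0 := SL G.toCGraph p 1 with hs0def
    set s1 := SL G.toCGraph (fun i => p ((r - 1) + i)) 1 with hs1def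
    set Mr := SL G.toCGraph (fun i => p (r + i)) (k - r) with hMrdef
    have hs0le : s0 ≤ 1 := SL_le _ _ _
    have hs1le : s1 ≤ 1 := SL_le _ _ _
    have hdecomp : SL G.toCGraph p k = s0 + I₀ + s1 + Mr := by omega
    have hs0lt : 1 ≤ s0 → G.lt (p 0) (p 1) := fun h => SL_one _ h
    have hs1lt : 1 ≤ s1 → G.lt (p (r - 1)) (p r) := by
      intro h
      have := SL_one G.toCGraph h
      simpa [show r - 1 + 1 = r from by omega] using this
    -- the prefix 0..r and its strict length
    have hGPpre : GP G w p r := hGP.pre (by omega) hrw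
    have hspr1 := SL_split G.toCGraph p (r := 1) (k := r) (by omega)
    have hspr2 := SL_split G.toCGraph (fun i => p (1 + i)) (r := r - 2) (k := r - 1) (by omega)
    rw [shift_shift p 1 (r - 2), show 1 + (r - 2) = r - 1 from by omega] at hspr2
    rw [show r - 1 - (r - 2) = 1 from by omega] at hspr2
    have hprefdecomp : SL G.toCGraph p r = s0 + I₀ + s1 := by omega
    have hclpre := claimI G r p w hGPpre (by omega)
    -- bags for the first excursion
    have bag0γ : inBag (w ++ [γ]) (p 0) := inBag_parent hGP.first
    have bagrm1γ : inBag (w ++ [γ]) (p (r - 1)) := inBag_self hrm1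
    have bagrγ : inBag (w ++ [γ]) (p r) := inBag_parent hrw
    have bagkγ : inBag (w ++ [γ]) (p k) := inBag_parent hGP.last
    by_cases hrk' : r = k
    · -- no rest: dive into the single excursion
      right
      refine ⟨1, r - 2, γ, by omega, by omega, hGPin, e01, ?_, ?_, ?_⟩
      · rw [show 1 + (r - 2) = r - 1 from by omega]
        rw [← hrk']
        exact erm'
      · intro hg
        rw [← hI₀def] at hg
        rw [show 1 + (r - 2) = r - 1 from by omega]
        have hMr0 : Mr = 0 := by
          rw [hMrdef, show k - r = 0 from by omega]
          simp [SL]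
        rcases show 1 ≤ s0 ∨ 1 ≤ s1 by omega with hs | hs
        · exact Or.inl (hs0lt hs)
        · rw [← hrk']
          exact Or.inr (hs1lt hs)
      · rw [← hI₀def]
        have hMr0 : Mr = 0 := by
          rw [hMrdef, show k - r = 0 from by omega]
          simp [SL]
        have hmul : (V p k w - 1) * (I₀ + 3) = (V p k w - 2) * (I₀ + 3) + (I₀ + 3) := by
          have := mul_expand (a := V p k w - 1) (b := I₀ + 3) (by omega)
          rw [this, show V p k w - 1 - 1 = V p k w - 2 from by omega]
        omega
    · -- there is a rest
      have hGPrest : GP G w (fun i => p (r + i)) (k - r) := hGP.shiftN (by omega) hrw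
      have hclrest := claimI G (k - r) (fun i => p (r + i)) w hGPrest (by omega)
      have hclrest' : Edg G.toCGraph (p r) (p k) ∧ (1 ≤ Mr → G.lt (p r) (p k)) := by
        rw [hMrdef]
        simpa [show r + (k - r) = k from by omega] using hclrest
      have hVr2 : 2 ≤ V (fun i => p (r + i)) (k - r) w :=
        V_ge2 (p := fun i => p (r + i)) (k := k - r) hGPrest.first hGPrest.last (by omega)
      have hnerm1k : p (r - 1) ≠ p k := hGP.ne (by omega) (by omega) (by omega)
      have hErm1k : Edg G.toCGraph (p (r - 1)) (p k) :=
        edg_trans G bagrm1γ bagrγ bagkγ hnerm1k erm' hclrest'.1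
      -- strictness transfer for the first-excursion dive
      have hfirstgain : 1 ≤ s0 + s1 + Mr →
          G.lt (p 0) (p 1) ∨ G.lt (p (r - 1)) (p k) := by
        intro hg
        by_cases hs : 1 ≤ s0
        · exact Or.inl (hs0lt hs)
        · by_cases hs' : 1 ≤ s1
          · exact Or.inr (edg_trans_strict G bagrm1γ bagrγ bagkγ hnerm1k erm' hclrest'.1
              (Or.inl (hs1lt hs')))
          · exact Or.inr (edg_trans_strict G bagrm1γ bagrγ bagkγ hnerm1k erm' hclrest'.1
              (Or.inr (hclrest'.2 (by omega))))
      rcases ih (k - r) (by omega) _ w hGPrest (by omega) with hleft | hdive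
      · -- rest is all-horizontal-ish: dive first excursion
        right
        refine ⟨1, r - 2, γ, by omega, by omega, hGPin, e01, ?_, ?_, ?_⟩
        · rw [show 1 + (r - 2) = r - 1 from by omega]
          exact hErm1k
        · intro hg
          rw [← hI₀def] at hg
          rw [show 1 + (r - 2) = r - 1 from by omega]
          exact hfirstgain (by omega)
        · rw [← hI₀def]
          set Vr := V (fun i => p (r + i)) (k - r) w with hVrdef
          rw [show V p k w - 1 = Vr from by omega]
          have hmul : Vr * (I₀ + 3) = (Vr - 1) * (I₀ + 3) + (I₀ + 3) := mul_expand (by omega)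
          have hge : Vr - 1 ≤ (Vr - 1) * (I₀ + 3) := Nat.le_mul_of_pos_right _ (by omega)
          omega
      · obtain ⟨off₂, k₂, δ, hoff1, hoffk, hGP2, he1, he2, hgain, hbound⟩ := hdive
        rw [shift_shift p r off₂] at hgain hbound
        rw [show r + (off₂ + k₂) = (r + off₂) + k₂ from by omega] at he2 hgain
        rw [show r + (k - r) = k from by omega] at he2 hgain
        set I₂ := SL G.toCGraph (fun i => p ((r + off₂) + i)) k₂ with hI₂def
        by_cases hcmp : I₂ ≤ I₀
        · -- dive the first excursion
          right
          refine ⟨1, r - 2, γ, by omega, by omega, hGPin, e01, ?_, ?_, ?_⟩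
          · rw [show 1 + (r - 2) = r - 1 from by omega]
            exact hErm1k
          · intro hg
            rw [← hI₀def] at hg
            rw [show 1 + (r - 2) = r - 1 from by omega]
            exact hfirstgain (by omega)
          · rw [← hI₀def]
            set Vr := V (fun i => p (r + i)) (k - r) w with hVrdef
            rw [show V p k w - 1 = Vr from by omega]
            have hmul : Vr * (I₀ + 3) = (Vr - 1) * (I₀ + 3) + (I₀ + 3) := mul_expand (by omega)
            have hmono : (Vr - 1) * (I₂ + 3) ≤ (Vr - 1) * (I₀ + 3) :=
              Nat.mul_le_mul_left _ (by omega)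
            omega
        · -- dive the later excursion
          have hGP2' : GP G (w ++ [δ]) (fun i => p (r + off₂ + i)) k₂ := by
            first
            | exact hGP2
            | rwa [shift_shift p r off₂] at hGP2
          right
          refine ⟨r + off₂, k₂, δ, by omega, by omega, hGP2', ?_, he2, ?_, ?_⟩
          · have bag0 : inBag (w ++ [δ]) (p 0) := inBag_parent hGP.first
            have bagr : inBag (w ++ [δ]) (p r) := inBag_parent hrw
            have bagc : inBag (w ++ [δ]) (p (r + off₂)) := inBag_self hGP2'.first
            exact edg_trans G bag0 bagr bagc
              (hGP.ne (by omega) (by omega) (by omega)) hclpre.1 he1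
          · intro hg
            rw [← hI₂def] at hg
            have bag0 : inBag (w ++ [δ]) (p 0) := inBag_parent hGP.first
            have bagr : inBag (w ++ [δ]) (p r) := inBag_parent hrw
            have bagc : inBag (w ++ [δ]) (p (r + off₂)) := inBag_self hGP2'.first
            by_cases hspre : 1 ≤ SL G.toCGraph p r
            · exact Or.inl (edg_trans_strict G bag0 bagr bagc
                (hGP.ne (by omega) (by omega) (by omega)) hclpre.1 he1
                (Or.inl (hclpre.2 hspre)))
            · rcases hgain (by omega) with hg' | hg'
              · exact Or.inl (edg_trans_strict G bag0 bagr bagc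
                  (hGP.ne (by omega) (by omega) (by omega)) hclpre.1 he1 (Or.inr hg'))
              · exact Or.inr hg'
          · rw [← hI₂def]
            set Vr := V (fun i => p (r + i)) (k - r) w with hVrdef
            rw [show V p k w - 1 = Vr from by omega]
            have hmul : Vr * (I₂ + 3) = (Vr - 1) * (I₂ + 3) + (I₂ + 3) := mul_expand (by omega)
            omega


/-! ### Wrapping a down-then-up path one level up -/

lemma wrap (G : Framified n R c₀ cα) {w : Node n} {γ : Fin n} {a b : Vtx n R}
    {q : ℕ → Vtx n R} {m : ℕ}
    (ha : a.1 = w) (hb : b.1 = w) (hq0 : (q 0).1 = w ++ [γ]) (hqm : (q m).1 = w ++ [γ])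
    (hpath : G.toCGraph.IsPathTo q m) (hdtu : DownThenUp q m)
    (e1 : Edg G.toCGraph a (q 0)) (e2 : Edg G.toCGraph (q m) b) :
    ∃ K q2, q2 0 = a ∧ q2 K = b ∧ G.toCGraph.IsPathTo q2 K ∧ DownThenUp q2 K ∧
      SL G.toCGraph q m ≤ SL G.toCGraph q2 K ∧
      ((G.lt a (q 0) ∨ G.lt (q m) b) → SL G.toCGraph q m + 1 ≤ SL G.toCGraph q2 K) := by
  classical
  set q' : ℕ → Vtx n R := fun i => if i = 0 then a else if i ≤ m + 1 then q (i - 1) else b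
    with hq'def
  have hv0 : q' 0 = a := by simp [hq'def]
  have hvmid : ∀ i, 1 ≤ i → i ≤ m + 1 → q' i = q (i - 1) := by
    intro i h1 h2
    rw [hq'def]
    simp only []
    rw [if_neg (by omega), if_pos h2]
  have hvend : q' (m + 2) = b := by
    rw [hq'def]
    simp only []
    rw [if_neg (by omega), if_neg (by omega)]
  have hpath' : G.toCGraph.IsPathTo q' (m + 2) := by
    intro i hi
    by_cases h0 : i = 0
    · subst h0
      rw [hv0, hvmid 1 (by omega) (by omega)]
      simpa [Edg] using e1
    · by_cases hmid : i ≤ m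
      · rw [hvmid i (by omega) (by omega), hvmid (i + 1) (by omega) (by omega)]
        have := hpath (i - 1) (by omega)
        simpa [show i - 1 + 1 = i from by omega, show i + 1 - 1 = i from by omega] using this
      · have him : i = m + 1 := by omega
        subst him
        rw [hvmid (m + 1) (by omega) (by omega), show m + 1 + 1 = m + 2 from rfl, hvend]
        simpa [Edg] using e2
  obtain ⟨j, hjm, hdown, hup⟩ := hdtu
  have hdtu' : DownThenUp q' (m + 2) := by
    refine ⟨j + 1, by omega, ?_, ?_⟩
    · intro i hij
      by_cases h0 : i = 0
      · subst h0
        rw [hv0, hvmid 1 (by omega) (by omega)]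
        show IsChild (q (1 - 1)).1 a.1
        simp only [show (1 : ℕ) - 1 = 0 from rfl]
        rw [hq0, ha]
        exact ⟨γ, rfl⟩
      · rw [hvmid i (by omega) (by omega), hvmid (i + 1) (by omega) (by omega)]
        have := hdown (i - 1) (by omega)
        simpa [show i - 1 + 1 = i from by omega, show i + 1 - 1 = i from by omega] using this
    · intro i hji hi2
      by_cases hlast : i = m + 1
      · subst hlast
        rw [hvmid (m + 1) (by omega) (by omega), show m + 1 + 1 = m + 2 from rfl, hvend]
        show IsChild (q (m + 1 - 1)).1 b.1
        simp only [show m + 1 - 1 = m from by omega]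
        rw [hqm, hb]
        exact ⟨γ, rfl⟩
      · rw [hvmid i (by omega) (by omega), hvmid (i + 1) (by omega) (by omega)]
        have := hup (i - 1) (by omega) (by omega)
        simpa [show i - 1 + 1 = i from by omega, show i + 1 - 1 = i from by omega] using this
  have hsp1 := SL_split G.toCGraph q' (r := 1) (k := m + 2) (by omega)
  rw [show m + 2 - 1 = m + 1 from rfl] at hsp1
  have hsp2 := SL_split G.toCGraph (fun i => q' (1 + i)) (r := m) (k := m + 1) (by omega)
  rw [shift_shift q' 1 m, show m + 1 - m = 1 from by omega] at hsp2
  have hmid : SL G.toCGraph (fun i => q' (1 + i)) m = SL G.toCGraph q m := by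
    apply SL_congr
    intro i hi
    show q' (1 + i) = q i
    rw [hvmid (1 + i) (by omega) (by omega)]
    congr 1
    omega
  have hs_a : G.lt a (q 0) → 1 ≤ SL G.toCGraph q' 1 := by
    intro h
    apply SL_pos_of G.toCGraph (i := 0) (by omega)
    rw [hv0, hvmid 1 (by omega) (by omega)]
    simpa using h
  have hs_b : G.lt (q m) b → 1 ≤ SL G.toCGraph (fun i => q' (1 + m + i)) 1 := by
    intro h
    apply SL_pos_of G.toCGraph (i := 0) (by omega)
    show G.lt (q' (1 + m + 0)) (q' (1 + m + 0 + 1))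
    have hg1 : q' (1 + m + 0) = q m := by
      rw [show 1 + m + 0 = m + 1 from by omega, hvmid (m + 1) (by omega) (by omega)]
      congr 1
    have hg2 : q' (1 + m + 0 + 1) = b := by
      rw [show 1 + m + 0 + 1 = m + 2 from by omega, hvend]
    rw [hg1, hg2]
    exact h
  refine ⟨m + 2, q', hv0, hvend, hpath', hdtu', by omega, ?_⟩
  rintro (h | h)
  · have := hs_a h
    omega
  · have := hs_b h
    omega

/-! ### The threshold function and the harvest -/

def Thresh (T : ℕ) : ℕ → ℕ
  | 0 => 1
  | N + 1 => (T - 1) * (Thresh T N + 3) + 1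

lemma thresh_pos (T N : ℕ) : 1 ≤ Thresh T N := by
  cases N <;> simp [Thresh]

theorem harvest (G : Framified n R c₀ cα) [Fintype R] :
    ∀ k (p : ℕ → Vtx n R) (w : Node n) (N : ℕ), GP G w p k →
      Thresh (Fintype.card R) N ≤ SL G.toCGraph p k →
      ∃ K q, q 0 = p 0 ∧ q K = p k ∧ G.toCGraph.IsPathTo q K ∧ DownThenUp q K ∧
        N ≤ SL G.toCGraph q K := by
  classical
  intro k
  induction k using Nat.strong_induction_on with
  | _ k ih =>
  intro p w N hGP hM
  have hT1 : 1 ≤ Thresh (Fintype.card R) N := thresh_pos _ _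
  have hk : 1 ≤ k := by
    by_contra hh
    have hk0 : k = 0 := by omega
    subst hk0
    have : SL G.toCGraph p 0 = 0 := by simp [SL]
    omega
  cases N with
  | zero =>
    have hcl := claimI G k p w hGP hk
    refine ⟨1, fun i => if i = 0 then p 0 else p k, by simp, by simp, ?_, ?_, Nat.zero_le _⟩
    · intro i hi
      have h0 : i = 0 := by omega
      subst h0
      simpa [Edg] using hcl.1
    · exact ⟨0, by omega, fun i hi => by omega, fun i h1 h2 => by omega⟩
  | succ N =>
    set T := Fintype.card R with hTdef
    have heq : Thresh T (N + 1) = (T - 1) * (Thresh T N + 3) + 1 := rfl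
    rcases auxDive G k p w hGP hk with hflat |
      ⟨off, k', γ, hoff1, hoffk, hGP', he1, he2, hgain, hbound⟩
    · exfalso
      have hVle : V p k w ≤ T := V_le hGP
      have hx : 4 ≤ Thresh T N + 3 := by
        have := thresh_pos T N
        omega
      have hge : T - 1 ≤ (T - 1) * (Thresh T N + 3) := Nat.le_mul_of_pos_right _ (by omega)
      omega
    · set I := SL G.toCGraph (fun i => p (off + i)) k' with hIdef
      have hk'lt : k' < k := by omega
      by_cases hIbig : Thresh T (N + 1) ≤ I
      · obtain ⟨k'', q, hq0, hqk, hqpath, hqdtu, hqN⟩ :=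
          ih k' hk'lt _ (w ++ [γ]) (N + 1) hGP' hIbig
        have hq0n : (q 0).1 = w ++ [γ] := by rw [hq0]; exact hGP'.first
        have hqkn : (q k'').1 = w ++ [γ] := by rw [hqk]; exact hGP'.last
        obtain ⟨K, q2, h20, h2K, h2path, h2dtu, h2mono, h2gain⟩ :=
          wrap G hGP.first hGP.last hq0n hqkn hqpath hqdtu
            (by rw [hq0]; exact he1) (by rw [hqk]; exact he2)
        exact ⟨K, q2, h20, h2K, h2path, h2dtu, by omega⟩
      · have hIN : Thresh T N ≤ I := by
          by_contra hh
          have hVle : V p k w ≤ T := V_le hGP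
          have h1 : (V p k w - 1) * (I + 3) ≤ (T - 1) * (I + 3) :=
            Nat.mul_le_mul_right _ (by omega)
          have h2 : (T - 1) * (I + 3 + 1) ≤ (T - 1) * (Thresh T N + 3) :=
            Nat.mul_le_mul_left _ (by omega)
          rw [Nat.mul_succ] at h2
          omega
        have hgain' := hgain (by omega)
        obtain ⟨k'', q, hq0, hqk, hqpath, hqdtu, hqN⟩ :=
          ih k' hk'lt _ (w ++ [γ]) N hGP' hIN
        have hq0n : (q 0).1 = w ++ [γ] := by rw [hq0]; exact hGP'.first
        have hqkn : (q k'').1 = w ++ [γ] := by rw [hqk]; exact hGP'.last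
        obtain ⟨K, q2, h20, h2K, h2path, h2dtu, h2mono, h2gain⟩ :=
          wrap G hGP.first hGP.last hq0n hqkn hqpath hqdtu
            (by rw [hq0]; exact he1) (by rw [hqk]; exact he2)
        have hfin : SL G.toCGraph q k'' + 1 ≤ SL G.toCGraph q2 K := by
          apply h2gain
          rcases hgain' with h | h
          · exact Or.inl (by rw [hq0]; exact h)
          · exact Or.inr (by rw [hqk]; exact h)
        exact ⟨K, q2, h20, h2K, h2path, h2dtu, by omega⟩

/-- if `ℓ((u,x),(u,y)) = ∞` in a framified constraint graph, then for
every `N` there is a down-then-up path from `(u,x)` to `(u,y)` of strict length at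
least `N`. -/
theorem ell_infinite_down_then_up (n : ℕ) (hn : 1 ≤ n)
    (R : Type) [Fintype R] [Nonempty R] (c₀ cα : ℤ) (hc : c₀ ≤ cα)
    (G : Framified n R c₀ cα) (u : Node n) (x y : R)
    (h : EllInf G u x y) :
    ∀ N : ℕ, ∃ (k : ℕ) (p : ℕ → Vtx n R),
      p 0 = (u, x) ∧ p k = (u, y) ∧ G.toCGraph.IsPathTo p k ∧
      DownThenUp p k ∧ N ≤ G.toCGraph.strictLen p k := by
  intro N
  obtain ⟨k, p, h0, hk, hpath, hinj, hpre, hm⟩ := h (Thresh (Fintype.card R) N)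
  have hGP : GP G u p k :=
    { path := hpath
      inj := hinj
      sub := hpre
      first := by rw [h0]
      last := by rw [hk] }
  rw [strictLen_eq] at hm
  obtain ⟨K, q, hq0, hqK, hqpath, hqdtu, hqN⟩ := harvest G k p u N hGP hm
  exact ⟨K, q, by rw [hq0, h0], by rw [hqK, hk], hqpath, hqdtu, by rw [strictLen_eq]; exact hqN⟩

end ConstraintGraphs
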